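/- Let A = M L D Lᵀ Mᵀ with M orthogonal, L invertible lower triangular, D = diag(D₁₁, 0) with D₁₁ invertible of size r. Set c = Mᵀb, partitioned as (c₁, c₂) with c₁ ∈ ℝʳ. If z₁ ∈ ℝʳ satisfies (L₁₁ᵀL₁₁ + L₂₁ᵀL₂₁) z₁ = L₁₁ᵀc₁ + L₂₁ᵀc₂, then any x̂ with D Lᵀ Mᵀ x̂ = (z₁, 0) is a least squares solution of Ax = b. -/
import Mathlib


open Matrix

theorem stmt_7 (r m : ℕ)
    (A M L D : Matrix (Fin r ⊕ Fin m) (Fin r ⊕ Fin m) ℝ)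
    (L₁₁ : Matrix (Fin r) (Fin r) ℝ) (L₂₁ : Matrix (Fin m) (Fin r) ℝ)
    (d : Fin r → ℝ)
    (hM : Mᵀ * M = 1)
    (hL : L = Matrix.fromBlocks L₁₁ 0 L₂₁ 1)
    (hL11 : IsUnit L₁₁.det)
    (hL11lower : ∀ i j : Fin r, i < j → L₁₁ i j = 0)
    (hD : D = Matrix.fromBlocks (Matrix.diagonal d) 0 0 0)
    (hd : ∀ i, d i ≠ 0)
    (hA : A = M * L * D * Lᵀ * Mᵀ)
    (b : Fin r ⊕ Fin m → ℝ) (c : Fin r ⊕ Fin m → ℝ) (hc : c = Mᵀ *ᵥ b)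
    (c₁ : Fin r → ℝ) (hc₁ : c₁ = c ∘ Sum.inl)
    (c₂ : Fin m → ℝ) (hc₂ : c₂ = c ∘ Sum.inr)
    (z₁ : Fin r → ℝ)
    (hz₁ : (L₁₁ᵀ * L₁₁ + L₂₁ᵀ * L₂₁) *ᵥ z₁ = L₁₁ᵀ *ᵥ c₁ + L₂₁ᵀ *ᵥ c₂)
    (xhat : Fin r ⊕ Fin m → ℝ)
    (hxhat : (D * Lᵀ * Mᵀ) *ᵥ xhat = Sum.elim z₁ 0) :
    ∀ x : Fin r ⊕ Fin m → ℝ,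
      ∑ i, (b - A *ᵥ xhat) i ^ 2 ≤ ∑ i, (b - A *ᵥ x) i ^ 2 := by
  intro x
  have hcsum : c = Sum.elim c₁ c₂ := by
    funext i; cases i <;> simp [hc₁, hc₂]
  have hLT : Lᵀ = Matrix.fromBlocks L₁₁ᵀ L₂₁ᵀ 0 1 := by
    rw [hL, Matrix.fromBlocks_transpose]; simp
  have hDT : Dᵀ = D := by
    rw [hD, Matrix.fromBlocks_transpose]; simp
  have hAT : Aᵀ = A := by
    rw [hA]
    simp only [Matrix.transpose_mul, Matrix.transpose_transpose, hDT, Matrix.mul_assoc]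
  have key : D *ᵥ (Lᵀ *ᵥ c) = D *ᵥ (Lᵀ *ᵥ (L *ᵥ Sum.elim z₁ 0)) := by
    rw [hLT, hL, hD, hcsum]
    rw [Matrix.fromBlocks_mulVec, Matrix.fromBlocks_mulVec]
    simp only [Matrix.zero_mulVec, Matrix.one_mulVec, Matrix.mulVec_zero, add_zero, zero_add,
      Sum.elim_comp_inl, Sum.elim_comp_inr]
    rw [Matrix.fromBlocks_mulVec, Matrix.fromBlocks_mulVec, Matrix.fromBlocks_mulVec]
    simp only [Matrix.zero_mulVec, Matrix.one_mulVec, Matrix.mulVec_zero, add_zero, zero_add,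
      Sum.elim_comp_inl, Sum.elim_comp_inr]
    rw [← hz₁, Matrix.add_mulVec, Matrix.mulVec_mulVec, Matrix.mulVec_mulVec]
  have hAe : A *ᵥ (b - A *ᵥ xhat) = 0 := by
    have h1 : A *ᵥ xhat = (M * L) *ᵥ Sum.elim z₁ 0 := by
      rw [hA, ← hxhat]
      simp only [← Matrix.mulVec_mulVec, Matrix.mul_assoc]
    have h2 : A *ᵥ (A *ᵥ xhat) = (M * L) *ᵥ (D *ᵥ (Lᵀ *ᵥ (L *ᵥ Sum.elim z₁ 0))) := by
      have hMM : Mᵀ *ᵥ (M *ᵥ (L *ᵥ Sum.elim z₁ 0)) = L *ᵥ Sum.elim z₁ 0 := by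
        rw [Matrix.mulVec_mulVec, hM, Matrix.one_mulVec]
      rw [h1, hA]
      simp only [← Matrix.mulVec_mulVec]
      rw [hMM]
    have h3 : A *ᵥ b = (M * L) *ᵥ (D *ᵥ (Lᵀ *ᵥ c)) := by
      rw [hA, hc]
      simp only [← Matrix.mulVec_mulVec]
    rw [Matrix.mulVec_sub, h2, h3, key, sub_self]
  -- residual orthogonality
  set e := b - A *ᵥ xhat with he
  have horth : ∀ u : Fin r ⊕ Fin m → ℝ, e ⬝ᵥ (A *ᵥ u) = 0 := by
    intro u
    rw [Matrix.dotProduct_mulVec, ← Matrix.mulVec_transpose, hAT, hAe]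
    simp
  have hsplit : b - A *ᵥ x = e + A *ᵥ (xhat - x) := by
    rw [Matrix.mulVec_sub, he]; abel
  rw [hsplit]
  have hexp : ∑ i, (e + A *ᵥ (xhat - x)) i ^ 2
      = ∑ i, e i ^ 2 + 2 * (e ⬝ᵥ (A *ᵥ (xhat - x))) + ∑ i, (A *ᵥ (xhat - x)) i ^ 2 := by
    simp only [Pi.add_apply, dotProduct, Finset.mul_sum, ← Finset.sum_add_distrib]
    apply Finset.sum_congr rfl
    intro i _
    ring
  rw [hexp, horth]
  have : 0 ≤ ∑ i, (A *ᵥ (xhat - x)) i ^ 2 := Finset.sum_nonneg fun i _ => sq_nonneg _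
  linarith
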